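/- In the attractor setting, assume there exists a continuous map r : N → N with r(x̂) ∈ N_{π(x̂)} for every x̂ ∈ N and r(x̂) = r(ŷ) whenever π(x̂) = π(ŷ). Let φ : N → ℝ be Hölder continuous. Then the series u(x̂) = Σ_{j=0}^{∞} [φ(F^j(x̂)) − φ(F^j(r(x̂)))] converges and defines a continuous function u : N → ℝ, and the potential φ̄ := φ − u + u∘F is continuous and constant on each fiber N_x (i.e. φ̄(ŷ) = φ̄(ẑ) whenever π(ŷ) = π(ẑ)). Moreover, if φ satisfies (H4) and (H5), then so does φ̄. -/

import Mathlib

open MeasureTheory Set Filter Topology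
open scoped ENNReal NNReal

noncomputable section

namespace PaperWG

variable {X : Type*}

section Dyn

variable [MetricSpace X]

/-- The dynamical ball `B_ε(x,n) = {y : d(T^j x, T^j y) < ε for all 0 ≤ j ≤ n}`. -/
def dynBall (T : X → X) (x : X) (n : ℕ) (ε : ℝ) : Set X :=
  {y | ∀ j ≤ n, dist (T^[j] x) (T^[j] y) < ε}

/-- Birkhoff sum `S_n φ(x) = ∑_{j=0}^{n-1} φ(T^j x)`. -/
def birkhoff (T : X → X) (φ : X → ℝ) (n : ℕ) (x : X) : ℝ :=
  ∑ j ∈ Finset.range n, φ (T^[j] x)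

/-- `R_{n,ε}φ(x) = sup_{y ∈ B_ε(x,n)} S_n φ(y)`. -/
def rSup (T : X → X) (φ : X → ℝ) (n : ℕ) (ε : ℝ) (x : X) : ℝ :=
  sSup (birkhoff T φ n '' dynBall T x n ε)

/-- `m_T(φ,Λ,ε,N,γ)`: infimum over countable covers of `Λ` by dynamical balls with
time at least `N` of `∑ exp(-γ n + R_{n,ε}φ(x))`. -/
def mPre (T : X → X) (φ : X → ℝ) (Λ : Set X) (ε : ℝ) (N : ℕ) (γ : ℝ) : ℝ≥0∞ :=
  ⨅ (U : Set (X × ℕ)) (_ : U.Countable) (_ : ∀ p ∈ U, N ≤ p.2)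
    (_ : Λ ⊆ ⋃ p ∈ U, dynBall T p.1 p.2 ε),
    ∑' p : U, ENNReal.ofReal (Real.exp (-γ * (p.1.2 : ℝ) + rSup T φ p.1.2 ε p.1.1))

/-- `m_T(φ,Λ,ε,γ) = lim_{N→∞} m_T(φ,Λ,ε,N,γ)`; the quantity is nondecreasing in `N`,
so the limit is the supremum. -/
def mRel (T : X → X) (φ : X → ℝ) (Λ : Set X) (ε γ : ℝ) : ℝ≥0∞ :=
  ⨆ N : ℕ, mPre T φ Λ ε N γ

/-- `P_T(φ,Λ,ε) = inf {γ : m_T(φ,Λ,ε,γ) = 0}`. -/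
def presRelEps (T : X → X) (φ : X → ℝ) (Λ : Set X) (ε : ℝ) : ℝ :=
  sInf {γ : ℝ | mRel T φ Λ ε γ = 0}

/-- The relative topological pressure `P_T(φ,Λ) = lim_{ε→0} P_T(φ,Λ,ε)`; the quantity is
nonincreasing in `ε`, so the limit is the supremum over `ε > 0`. -/
def presRel (T : X → X) (φ : X → ℝ) (Λ : Set X) : ℝ :=
  ⨆ ε : {e : ℝ // 0 < e}, presRelEps T φ Λ ε.1

/-- The topological pressure `P_T(φ) = P_T(φ, X)`. -/
def pres (T : X → X) (φ : X → ℝ) : ℝ :=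
  presRel T φ Set.univ

/-- `g` maps `A` homeomorphically onto `B`. -/
def MapsHomeomorphicallyOnto (g : X → X) (A B : Set X) : Prop :=
  g '' A = B ∧ ∃ e : A ≃ₜ B, ∀ a : A, (e a : X) = g a

/-- Condition (*): `n ≥ 1` is a Gibbs time for `x` when `f^n` maps the dynamical ball
`B_ε(x,n)` homeomorphically onto the ball `B(f^n x, ε)` for every `0 < ε < δ₀`. -/
def IsGibbsTime (f : X → X) (δ₀ : ℝ) (x : X) (n : ℕ) : Prop :=
  1 ≤ n ∧ ∀ ε : ℝ, 0 < ε → ε < δ₀ →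
    MapsHomeomorphicallyOnto (f^[n]) (dynBall f x n ε) (Metric.ball (f^[n] x) ε)

/-- The set `G` of Hypothesis (H1): points whose frequency of Gibbs times is at least `θ`. -/
def gibbsSet (f : X → X) (δ₀ θ : ℝ) : Set X :=
  {x | θ ≤ Filter.atTop.limsup
    (fun n : ℕ => ((Set.Icc 1 n ∩ {j | IsGibbsTime f δ₀ x j}).ncard : ℝ) / n)}

/-- Every preorbit `⋃_{j≥0} f^{-j}(x)` is dense. -/
def DensePreorbits (f : X → X) : Prop :=
  ∀ x : X, Dense (⋃ n : ℕ, f^[n] ⁻¹' {x})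

/-- Hypothesis (H2): Bowen property of `φ` on `G` at Gibbs times. -/
def BowenOnGibbs (f : X → X) (φ : X → ℝ) (δ₀ : ℝ) (G : Set X) : Prop :=
  ∃ V > 0, ∃ ε > 0, ∀ x ∈ G, ∀ n : ℕ, IsGibbsTime f δ₀ x n →
    ∀ y ∈ dynBall f x n ε, ∀ z ∈ dynBall f x n ε,
      |∑ i ∈ Finset.range (n + 1), (φ (f^[i] y) - φ (f^[i] z))| ≤ V

/-- Bowen property of `φ` on a set `S` at all times (Hypothesis (H4)). -/
def BowenOn (T : X → X) (φ : X → ℝ) (S : Set X) : Prop :=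
  ∃ ε > 0, ∃ V > 0, ∀ x ∈ S, ∀ n : ℕ,
    ∀ y ∈ dynBall T x n ε, ∀ z ∈ dynBall T x n ε,
      |∑ j ∈ Finset.range (n + 1), (φ (T^[j] y) - φ (T^[j] z))| ≤ V

/-- Hypotheses (H3)/(H5): the topological pressure is located on `S`:
`P_T(φ, Sᶜ) < P_T(φ, S) = P_T(φ)`. -/
def PressureLocatedOn (T : X → X) (φ : X → ℝ) (S : Set X) : Prop :=
  presRel T φ Sᶜ < presRel T φ S ∧ presRel T φ S = pres T φ

end Dyn

section Meas

variable [MetricSpace X] [MeasurableSpace X]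

/-- `μ` is a weak Gibbs measure for `(T,φ)` with constant `P`. -/
def IsWeakGibbs (T : X → X) (φ : X → ℝ) (μ : Measure X) (P : ℝ) : Prop :=
  ∃ δ > 0, ∀ ε : ℝ, 0 < ε → ε ≤ δ → ∃ K > 0,
    ∀ᵐ x ∂μ, ∃ nk : ℕ → ℕ, StrictMono nk ∧
      ∀ k : ℕ, ∀ y ∈ dynBall T x (nk k) ε,
        ENNReal.ofReal (K⁻¹ * Real.exp (birkhoff T φ (nk k) y - (nk k : ℝ) * P))
            ≤ μ (dynBall T x (nk k) ε) ∧
          μ (dynBall T x (nk k) ε)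
            ≤ ENNReal.ofReal (K * Real.exp (birkhoff T φ (nk k) y - (nk k : ℝ) * P))

/-- The Ruelle–Perron–Frobenius transfer operator
`L_{f,φ} ψ (x) = ∑_{y ∈ f⁻¹(x)} e^{φ(y)} ψ(y)`. -/
def transferOp (f : X → X) (φ ψ : X → ℝ) (x : X) : ℝ :=
  ∑' y : (f ⁻¹' {x} : Set X), Real.exp (φ y) * ψ y

/-- A reference measure for `(f,φ)`: a Borel probability measure `ν` with
`L*_{f,φ} ν = λ ν`. -/
def IsReferenceMeasure (f : X → X) (φ : X → ℝ) (ν : Measure X) (lam : ℝ) : Prop :=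
  IsProbabilityMeasure ν ∧ 0 < lam ∧
    ∀ ψ : X → ℝ, Continuous ψ →
      ∫ x, transferOp f φ ψ x ∂ν = lam * ∫ x, ψ x ∂ν

end Meas

section Entropy

variable [MeasurableSpace X]

/-- Entropy of the finite partition of `X` by the fibers of `P`. -/
def partEntropy (μ : Measure X) {α : Type} [Fintype α] (P : X → α) : ℝ :=
  ∑ a : α, Real.negMulLog ((μ (P ⁻¹' {a})).toReal)

/-- Kolmogorov–Sinai entropy of `μ` with respect to the partition given by `P`. -/
def entropyWrt (T : X → X) (μ : Measure X) {k : ℕ} (P : X → Fin k) : ℝ :=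
  Filter.atTop.liminf fun n : ℕ =>
    partEntropy μ (fun x => fun j : Fin n => P (T^[(j : ℕ)] x)) / n

/-- Kolmogorov–Sinai (metric) entropy of `μ`: supremum over finite measurable
partitions of the entropy of `T` with respect to the partition. -/
def metricEntropy (T : X → X) (μ : Measure X) : ℝ :=
  ⨆ p : Σ k : ℕ, {P : X → Fin k // Measurable P}, entropyWrt T μ p.2.1

end Entropy

section Equi

variable [MetricSpace X] [MeasurableSpace X]

/-- `μ` is an equilibrium state for `(T,φ)`: it is `T`-invariant and attains the
supremum of `η ↦ h_η(T) + ∫ φ dη` over all `T`-invariant Borel probability measures. -/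
def IsEquilibriumState (T : X → X) (φ : X → ℝ) (μ : Measure X) : Prop :=
  IsProbabilityMeasure μ ∧ Measure.map T μ = μ ∧
    ∀ η : Measure X, IsProbabilityMeasure η → Measure.map T η = η →
      metricEntropy T η + ∫ x, φ x ∂η ≤ metricEntropy T μ + ∫ x, φ x ∂μ

/-- A generating partition for `G`: a countable measurable partition of `G` with finite
entropy whose iterates under `f` generate the Borel σ-algebra of `G` (in the sense that
every measurable set agrees on `G` with a set in the σ-algebra generated by the cylinders). -/
structure GeneratingPartition (f : X → X) (G : Set X) : Type _ where
  part : ℕ → Set X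
  measurable : ∀ i, MeasurableSet (part i)
  disj : Pairwise (Function.onFun Disjoint part)
  cover : G = ⋃ i, part i
  finiteEntropy : ∀ μ : Measure X, IsProbabilityMeasure μ →
    Summable fun i => Real.negMulLog ((μ (part i)).toReal)
  generates : ∀ B : Set X, MeasurableSet B →
    ∃ B' : Set X,
      MeasurableSet[MeasurableSpace.generateFrom
        {s : Set X | ∃ (n : ℕ) (a : Fin n → ℕ), s = ⋂ j : Fin n, f^[(j : ℕ)] ⁻¹' part (a j)}] B' ∧
      B ∩ G = B' ∩ G

end Equi

end PaperWG

namespace PaperWG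

section Helpers

variable {X : Type*} [MetricSpace X]

theorem birkhoff_coboundary (T : X → X) (φ u : X → ℝ) (n : ℕ) (x : X) :
    birkhoff T (fun y => φ y - u y + u (T y)) n x
      = birkhoff T φ n x + (u (T^[n] x) - u x) := by
  unfold birkhoff
  have h : ∀ j ∈ Finset.range n,
      φ (T^[j] x) - u (T^[j] x) + u (T (T^[j] x))
        = φ (T^[j] x) + (u (T^[j+1] x) - u (T^[j] x)) := by
    intro j _
    rw [Function.iterate_succ_apply']
    ring
  rw [Finset.sum_congr rfl h, Finset.sum_add_distrib,
    Finset.sum_range_sub (fun j => u (T^[j] x))]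
  simp

theorem rSup_le_add_of_close {T : X → X} {ψ φ : X → ℝ} {K : ℝ} (hK : 0 ≤ K)
    (h : ∀ (n : ℕ) (x : X), |birkhoff T ψ n x - birkhoff T φ n x| ≤ K)
    (n : ℕ) (ε : ℝ) (x : X) : rSup T ψ n ε x ≤ rSup T φ n ε x + K := by
  unfold rSup
  rcases (dynBall T x n ε).eq_empty_or_nonempty with he | hne
  · simp [he, Real.sSup_empty, hK]
  · have hne' : (birkhoff T ψ n '' dynBall T x n ε).Nonempty := hne.image _
    by_cases hbdd : BddAbove (birkhoff T φ n '' dynBall T x n ε)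
    · refine csSup_le hne' ?_
      rintro a ⟨y, hy, rfl⟩
      have h1 : birkhoff T ψ n y ≤ birkhoff T φ n y + K := by
        linarith [(abs_le.mp (h n y)).2]
      have h2 : birkhoff T φ n y ≤ sSup (birkhoff T φ n '' dynBall T x n ε) :=
        le_csSup hbdd ⟨y, hy, rfl⟩
      linarith
    · have hbdd' : ¬ BddAbove (birkhoff T ψ n '' dynBall T x n ε) := by
        rintro ⟨Mb, hM⟩
        apply hbdd
        refine ⟨Mb + K, ?_⟩
        rintro a ⟨y, hy, rfl⟩
        have h1 : birkhoff T φ n y ≤ birkhoff T ψ n y + K := by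
          linarith [(abs_le.mp (h n y)).1]
        have h2 : birkhoff T ψ n y ≤ Mb := hM ⟨y, hy, rfl⟩
        linarith
      rw [Real.sSup_of_not_bddAbove hbdd, Real.sSup_of_not_bddAbove hbdd']
      linarith

theorem mRel_zero_of_close {T : X → X} {ψ φ : X → ℝ} {K : ℝ} (hK : 0 ≤ K)
    (h : ∀ (n : ℕ) (x : X), |birkhoff T ψ n x - birkhoff T φ n x| ≤ K)
    (Λ : Set X) (ε γ : ℝ) (hφ0 : mRel T φ Λ ε γ = 0) : mRel T ψ Λ ε γ = 0 := by
  unfold mRel at hφ0 ⊢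
  refine le_antisymm (iSup_le fun N => ?_) zero_le
  have hN : mPre T φ Λ ε N γ = 0 :=
    le_antisymm ((le_iSup _ N).trans hφ0.le) zero_le
  set cE : ℝ≥0∞ := ENNReal.ofReal (Real.exp K) with hcE
  have hc0 : cE ≠ 0 := by
    simp only [hcE, ne_eq, ENNReal.ofReal_eq_zero, not_le]
    exact Real.exp_pos K
  have hcT : cE ≠ ⊤ := ENNReal.ofReal_ne_top
  refine ENNReal.le_of_forall_pos_le_add fun δ hδ _ => ?_
  rw [zero_add]
  have hδ' : (δ : ℝ≥0∞) ≠ 0 := by exact_mod_cast hδ.ne'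
  have hpos : (0 : ℝ≥0∞) < cE⁻¹ * δ :=
    ENNReal.mul_pos (ENNReal.inv_ne_zero.mpr hcT) hδ'
  have hlt : mPre T φ Λ ε N γ < cE⁻¹ * δ := by rw [hN]; exact hpos
  unfold mPre at hlt
  simp only [iInf_lt_iff] at hlt
  obtain ⟨U, hU, hNle, hcov, hUlt⟩ := hlt
  have step1 : mPre T ψ Λ ε N γ ≤
      ∑' p : U, ENNReal.ofReal (Real.exp (-γ * (p.1.2 : ℝ) + rSup T ψ p.1.2 ε p.1.1)) := by
    unfold mPre
    exact iInf_le_of_le U (iInf_le_of_le hU (iInf_le_of_le hNle (iInf_le _ hcov)))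
  have step2 : (∑' p : U, ENNReal.ofReal (Real.exp (-γ * (p.1.2 : ℝ) + rSup T ψ p.1.2 ε p.1.1)))
      ≤ cE * ∑' p : U, ENNReal.ofReal (Real.exp (-γ * (p.1.2 : ℝ) + rSup T φ p.1.2 ε p.1.1)) := by
    rw [← ENNReal.tsum_mul_left]
    refine ENNReal.tsum_le_tsum fun p => ?_
    rw [hcE, ← ENNReal.ofReal_mul (Real.exp_nonneg K), ← Real.exp_add]
    apply ENNReal.ofReal_le_ofReal
    apply Real.exp_le_exp.mpr
    have := rSup_le_add_of_close hK h p.1.2 ε p.1.1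
    linarith
  calc mPre T ψ Λ ε N γ ≤ _ := step1
    _ ≤ cE * ∑' p : U, ENNReal.ofReal (Real.exp (-γ * (p.1.2 : ℝ) + rSup T φ p.1.2 ε p.1.1)) :=
        step2
    _ ≤ cE * (cE⁻¹ * δ) := mul_le_mul_right hUlt.le _
    _ = δ := by rw [← mul_assoc, ENNReal.mul_inv_cancel hc0 hcT, one_mul]

theorem presRel_eq_of_close {T : X → X} {ψ φ : X → ℝ} {K : ℝ} (hK : 0 ≤ K)
    (h : ∀ (n : ℕ) (x : X), |birkhoff T ψ n x - birkhoff T φ n x| ≤ K)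
    (Λ : Set X) : presRel T ψ Λ = presRel T φ Λ := by
  have h' : ∀ (n : ℕ) (x : X), |birkhoff T φ n x - birkhoff T ψ n x| ≤ K := fun n x => by
    rw [abs_sub_comm]; exact h n x
  unfold presRel presRelEps
  refine iSup_congr fun ε => ?_
  congr 1
  ext γ
  exact ⟨fun hz => mRel_zero_of_close hK h' Λ ε.1 γ hz,
    fun hz => mRel_zero_of_close hK h Λ ε.1 γ hz⟩

end Helpers

end PaperWG

namespace PaperWG

/-- Proposition: any Hölder potential on the attractor is cohomologous, via the
converging series `u(x̂) = ∑_j (φ(F^j x̂) − φ(F^j r(x̂)))`, to a continuous potential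
which is constant on fibers; moreover (H4) and (H5) are preserved. -/
theorem holder_cohomologous_to_fiber_constant
    {M : Type*} [MetricSpace M] [CompactSpace M]
    {N : Type*} [MetricSpace N] [CompactSpace N]
    (f : M → M) (hf : IsLocalHomeomorph f) (hdense : DensePreorbits f)
    (δ₀ : ℝ) (hδ₀ : 0 < δ₀) (θ : ℝ) (hθ : 0 < θ)
    (G : Set M) (hG : G = gibbsSet f δ₀ θ)
    (F : N → N) (hFemb : IsEmbedding F)
    (π : N → M) (hπc : Continuous π) (hπs : Function.Surjective π)
    (hsemi : ∀ z : N, π (F z) = f (π z))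
    (lam : ℝ) (hlam0 : 0 < lam) (hlam1 : lam < 1)
    (hcontr : ∀ yh zh : N, π yh = π zh → dist (F yh) (F zh) ≤ lam * dist yh zh)
    (H : M → M → N → N) (C : ℝ) (hC : 1 ≤ C)
    (hHfib : ∀ (x y : M) (zh : N), π zh = x → π (H x y zh) = y)
    (hHdist : ∀ (x y : M) (xh yh : N), π xh = x → π yh = y →
      C⁻¹ * (dist x y + dist (H x y xh) yh) ≤ dist xh yh ∧
      dist xh yh ≤ C * (dist x y + dist (H x y xh) yh))
    (hHequi : ∀ (x y : M) (zh : N), π zh = x → F (H x y zh) = H (f x) (f y) (F zh))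
    (r : N → N) (hrc : Continuous r) (hrfib : ∀ xh : N, π (r xh) = π xh)
    (hrconst : ∀ xh yh : N, π xh = π yh → r xh = r yh)
    (φ : N → ℝ) (hφHolder : ∃ c s : NNReal, 0 < s ∧ HolderWith c s φ) :
    ∃ u : N → ℝ,
      (∀ xh : N, HasSum (fun j : ℕ => φ (F^[j] xh) - φ (F^[j] (r xh))) (u xh)) ∧
      Continuous u ∧
      (∀ yh zh : N, π yh = π zh →
        φ yh - u yh + u (F yh) = φ zh - u zh + u (F zh)) ∧
      ((BowenOn F φ (π ⁻¹' G) ∧ PressureLocatedOn F φ (π ⁻¹' G)) →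
        (BowenOn F (fun xh => φ xh - u xh + u (F xh)) (π ⁻¹' G) ∧
          PressureLocatedOn F (fun xh => φ xh - u xh + u (F xh)) (π ⁻¹' G))) := by
  classical
  obtain ⟨c, s, hs, hH⟩ := hφHolder
  have hs' : (0 : ℝ) < (s : ℝ) := by exact_mod_cast hs
  have hπF : ∀ (j : ℕ) (z : N), π (F^[j] z) = f^[j] (π z) := by
    intro j
    induction j with
    | zero => intro z; simp
    | succ j ih =>
      intro z
      rw [Function.iterate_succ_apply', Function.iterate_succ_apply', hsemi, ih]
  have hfiber_iter : ∀ (j : ℕ) (y z : N), π y = π z → π (F^[j] y) = π (F^[j] z) := by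
    intro j y z hyz
    rw [hπF, hπF, hyz]
  have hcontr_iter : ∀ (j : ℕ) (y z : N), π y = π z →
      dist (F^[j] y) (F^[j] z) ≤ lam ^ j * dist y z := by
    intro j
    induction j with
    | zero => intro y z _; simp
    | succ j ih =>
      intro y z hyz
      rw [Function.iterate_succ_apply', Function.iterate_succ_apply']
      calc dist (F (F^[j] y)) (F (F^[j] z)) ≤ lam * dist (F^[j] y) (F^[j] z) :=
            hcontr _ _ (hfiber_iter j y z hyz)
        _ ≤ lam * (lam ^ j * dist y z) :=
            mul_le_mul_of_nonneg_left (ih y z hyz) hlam0.le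
        _ = lam ^ (j + 1) * dist y z := by ring
  set D := Metric.diam (Set.univ : Set N) with hD
  have hDb : ∀ y z : N, dist y z ≤ D := fun y z =>
    Metric.dist_le_diam_of_mem isCompact_univ.isBounded (mem_univ y) (mem_univ z)
  have hD0 : 0 ≤ D := Metric.diam_nonneg
  set q := lam ^ (s : ℝ) with hq
  have hq0 : 0 ≤ q := Real.rpow_nonneg hlam0.le _
  have hq1 : q < 1 := Real.rpow_lt_one hlam0.le hlam1 hs'
  set A := (c : ℝ) * D ^ (s : ℝ) with hA
  have hA0 : 0 ≤ A := mul_nonneg c.coe_nonneg (Real.rpow_nonneg hD0 _)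
  set g : ℕ → N → ℝ := fun j x => φ (F^[j] x) - φ (F^[j] (r x)) with hg
  have hpow : ∀ j : ℕ, ((lam ^ j : ℝ)) ^ (s : ℝ) = q ^ j := by
    intro j
    rw [← Real.rpow_natCast lam j, ← Real.rpow_mul hlam0.le, mul_comm,
      Real.rpow_mul hlam0.le, Real.rpow_natCast]
  have hbound : ∀ (j : ℕ) (x : N), |g j x| ≤ A * q ^ j := by
    intro j x
    have h1 : dist (F^[j] x) (F^[j] (r x)) ≤ lam ^ j * D :=
      calc dist (F^[j] x) (F^[j] (r x)) ≤ lam ^ j * dist x (r x) :=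
            hcontr_iter j x (r x) (hrfib x).symm
        _ ≤ lam ^ j * D := mul_le_mul_of_nonneg_left (hDb _ _) (pow_nonneg hlam0.le j)
    have h2 : |g j x| ≤ (c : ℝ) * (dist (F^[j] x) (F^[j] (r x))) ^ (s : ℝ) := by
      have := hH.dist_le (F^[j] x) (F^[j] (r x))
      rwa [Real.dist_eq] at this
    calc |g j x| ≤ (c : ℝ) * (dist (F^[j] x) (F^[j] (r x))) ^ (s : ℝ) := h2
      _ ≤ (c : ℝ) * (lam ^ j * D) ^ (s : ℝ) :=
          mul_le_mul_of_nonneg_left (Real.rpow_le_rpow dist_nonneg h1 s.coe_nonneg)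
            c.coe_nonneg
      _ = A * q ^ j := by
          rw [Real.mul_rpow (pow_nonneg hlam0.le j) hD0, hpow, hA]
          ring
  have hgeo : Summable fun j : ℕ => A * q ^ j :=
    (summable_geometric_of_lt_one hq0 hq1).mul_left A
  have hsum : ∀ x : N, Summable fun j => g j x := fun x =>
    Summable.of_norm_bounded hgeo fun j => by
      simpa [Real.norm_eq_abs] using hbound j x
  set u : N → ℝ := fun x => ∑' j, g j x with hu
  have hHasSum : ∀ x : N, HasSum (fun j => g j x) (u x) := fun x => (hsum x).hasSum
  have hφc : Continuous φ := hH.continuous hs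
  have hFc : Continuous F := hFemb.continuous
  have hFiter : ∀ j : ℕ, Continuous (F^[j]) := fun j => hFc.iterate j
  have hgc : ∀ j, Continuous (g j) := fun j =>
    (hφc.comp (hFiter j)).sub (hφc.comp ((hFiter j).comp hrc))
  have huc : Continuous u :=
    continuous_tsum hgc hgeo fun j x => by simpa [Real.norm_eq_abs] using hbound j x
  set B := A * (1 - q)⁻¹ with hB
  have hB0 : 0 ≤ B := mul_nonneg hA0 (inv_nonneg.mpr (by linarith))
  have huB : ∀ x : N, |u x| ≤ B := by
    intro x
    have habs : Summable fun j => ‖g j x‖ :=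
      Summable.of_nonneg_of_le (fun j => norm_nonneg _)
        (fun j => by simpa [Real.norm_eq_abs] using hbound j x) hgeo
    calc |u x| ≤ ∑' j, ‖g j x‖ := by
          simpa [Real.norm_eq_abs] using norm_tsum_le_tsum_norm habs
      _ ≤ ∑' j, A * q ^ j :=
          Summable.tsum_le_tsum (fun j => by simpa [Real.norm_eq_abs] using hbound j x) habs hgeo
      _ = B := by rw [tsum_mul_left, tsum_geometric_of_lt_one hq0 hq1, hB]
  have hfibconst : ∀ yh zh : N, π yh = π zh →
      φ yh - u yh + u (F yh) = φ zh - u zh + u (F zh) := by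
    intro yh zh hyz
    have hr1 : r yh = r zh := hrconst _ _ hyz
    have hr2 : r (F yh) = r (F zh) := hrconst _ _ (by rw [hsemi, hsemi, hyz])
    have hS : HasSum (fun j => φ (F^[j] yh) - φ (F^[j] zh)) (u yh - u zh) := by
      have heq : (fun j => g j yh - g j zh) = fun j => φ (F^[j] yh) - φ (F^[j] zh) := by
        funext j
        simp only [hg, hr1]
        ring
      exact heq ▸ ((hHasSum yh).sub (hHasSum zh))
    have hS' : HasSum (fun j => φ (F^[j+1] yh) - φ (F^[j+1] zh)) (u (F yh) - u (F zh)) := by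
      have heq : (fun j => g j (F yh) - g j (F zh))
          = fun j => φ (F^[j+1] yh) - φ (F^[j+1] zh) := by
        funext j
        simp only [hg, hr2, Function.iterate_succ_apply]
        ring
      exact heq ▸ ((hHasSum (F yh)).sub (hHasSum (F zh)))
    have hS'' : HasSum (fun j => φ (F^[j+1] yh) - φ (F^[j+1] zh))
        ((u yh - u zh) - (φ yh - φ zh)) := by
      have := (hasSum_nat_add_iff' (f := fun j => φ (F^[j] yh) - φ (F^[j] zh)) 1).mpr hS
      simpa using this
    have huniq := hS'.unique hS''
    linarith
  refine ⟨u, fun xh => hHasSum xh, huc, hfibconst, ?_⟩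
  rintro ⟨hBow, hPres⟩
  have hclose : ∀ (n : ℕ) (x : N),
      |birkhoff F (fun xh => φ xh - u xh + u (F xh)) n x - birkhoff F φ n x| ≤ 2 * B := by
    intro n x
    rw [birkhoff_coboundary]
    have h1 := abs_le.mp (huB (F^[n] x))
    have h2 := abs_le.mp (huB x)
    rw [abs_le]
    constructor <;> [linarith; linarith]
  constructor
  · obtain ⟨ε, hε, V, hV, hB4⟩ := hBow
    refine ⟨ε, hε, V + 4 * B, by linarith, ?_⟩
    intro x hx n y hy z hz
    have e1 : ∑ j ∈ Finset.range (n + 1),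
        ((fun xh => φ xh - u xh + u (F xh)) (F^[j] y)
          - (fun xh => φ xh - u xh + u (F xh)) (F^[j] z))
        = (birkhoff F φ (n+1) y - birkhoff F φ (n+1) z)
          + ((u (F^[n+1] y) - u y) - (u (F^[n+1] z) - u z)) := by
      rw [Finset.sum_sub_distrib]
      show birkhoff F (fun xh => φ xh - u xh + u (F xh)) (n+1) y
          - birkhoff F (fun xh => φ xh - u xh + u (F xh)) (n+1) z = _
      rw [birkhoff_coboundary, birkhoff_coboundary]
      ring
    have e2 : ∑ j ∈ Finset.range (n + 1), (φ (F^[j] y) - φ (F^[j] z))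
        = birkhoff F φ (n+1) y - birkhoff F φ (n+1) z := by
      rw [Finset.sum_sub_distrib]
      rfl
    have hVb : |birkhoff F φ (n+1) y - birkhoff F φ (n+1) z| ≤ V := by
      rw [← e2]
      exact hB4 x hx n y hy z hz
    rw [e1]
    have hb1 := abs_le.mp (huB (F^[n+1] y))
    have hb2 := abs_le.mp (huB y)
    have hb3 := abs_le.mp (huB (F^[n+1] z))
    have hb4 := abs_le.mp (huB z)
    have hVb' := abs_le.mp hVb
    rw [abs_le]
    constructor <;> [linarith; linarith]
  · have h2B : (0 : ℝ) ≤ 2 * B := by linarith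
    obtain ⟨hlt, heq⟩ := hPres
    constructor
    · rw [presRel_eq_of_close h2B hclose, presRel_eq_of_close h2B hclose]
      exact hlt
    · rw [presRel_eq_of_close h2B hclose]
      unfold pres
      rw [presRel_eq_of_close h2B hclose]
      exact heq

end PaperWG
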